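/- The map x ↦ ∑_{n=1}^∞ x_n · 9/10^n from {0,1}^ℕ to ℝ is strictly monotone with respect to the lexicographic order: if x <_lex y then ∑_n x_n · 9/10^n < ∑_n y_n · 9/10^n. -/

import Mathlib

set_option maxHeartbeats 1000000


/-- The address map of the decimal Cantor set: `x ↦ ∑_{n=1}^∞ x_n · 9/10^n`. -/
noncomputable def decimalCantorMap (x : ℕ → Bool) : ℝ :=
  ∑' n : ℕ, (if x n then (9 : ℝ) / 10 ^ (n + 1) else 0)

lemma summable_geom9 : Summable (fun n : ℕ => (9 : ℝ) / 10 ^ (n + 1)) := by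
  have h : Summable (fun n : ℕ => (9 : ℝ) * (1/10) ^ (n+1)) :=
    ((summable_geometric_of_lt_one (by norm_num) (by norm_num)).comp_injective
      (add_left_injective 1)).mul_left 9
  refine h.congr fun n => ?_
  rw [div_pow, one_pow]
  ring

lemma summable_dcm (x : ℕ → Bool) :
    Summable (fun n : ℕ => (if x n then (9 : ℝ) / 10 ^ (n + 1) else 0)) := by
  refine summable_geom9.of_nonneg_of_le (fun n => ?_) (fun n => ?_)
  · split <;> positivity
  · split
    · exact le_rfl
    · positivity

/-- The map `x ↦ ∑_n x_n · 9/10^n` is strictly monotone for the lexicographic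
order: if `x` and `y` agree before coordinate `m`, `x_m = 0` and `y_m = 1`,
then `∑_n x_n·9/10^n < ∑_n y_n·9/10^n`. -/
theorem stmt7 (x y : ℕ → Bool) (m : ℕ)
    (hagree : ∀ k < m, x k = y k) (hx : x m = false) (hy : y m = true) :
    decimalCantorMap x < decimalCantorMap y := by
  have hfs := summable_dcm x
  have hgs := summable_dcm y
  have hxsplit : decimalCantorMap x
      = (∑ i ∈ Finset.range (m+1), if x i then (9:ℝ)/10^(i+1) else 0)
        + ∑' i : ℕ, (if x (i + (m+1)) then (9:ℝ)/10^(i + (m+1) + 1) else 0) :=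
    (Summable.sum_add_tsum_nat_add' ((summable_nat_add_iff (m+1)).2 hfs)).symm
  have hysplit : decimalCantorMap y
      = (∑ i ∈ Finset.range (m+1), if y i then (9:ℝ)/10^(i+1) else 0)
        + ∑' i : ℕ, (if y (i + (m+1)) then (9:ℝ)/10^(i + (m+1) + 1) else 0) :=
    (Summable.sum_add_tsum_nat_add' ((summable_nat_add_iff (m+1)).2 hgs)).symm
  have hhead : (∑ i ∈ Finset.range (m+1), if x i then (9:ℝ)/10^(i+1) else 0)
        + (9:ℝ)/10^(m+1)
      = ∑ i ∈ Finset.range (m+1), if y i then (9:ℝ)/10^(i+1) else 0 := by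
    rw [Finset.sum_range_succ, Finset.sum_range_succ]
    have h : (∑ i ∈ Finset.range m, if x i then (9:ℝ)/10^(i+1) else 0)
        = ∑ i ∈ Finset.range m, if y i then (9:ℝ)/10^(i+1) else 0 := by
      refine Finset.sum_congr rfl fun i hi => ?_
      rw [hagree i (Finset.mem_range.mp hi)]
    rw [h, hx, hy]
    simp
  have hgeom : ∑' i : ℕ, (9:ℝ)/10^(i + (m+1) + 1) = 1/10^(m+1) := by
    have h : ∀ i : ℕ, (9:ℝ)/10^(i + (m+1) + 1) = (9/10^(m+2)) * (1/10)^i := by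
      intro i
      rw [div_pow, one_pow]
      rw [div_mul_div_comm, mul_one, ← pow_add]
      ring_nf
    rw [tsum_congr h, tsum_mul_left,
      tsum_geometric_of_lt_one (by norm_num) (by norm_num),
      show (1:ℝ) - 1/10 = 9/10 by norm_num]
    rw [pow_succ]
    field_simp
  have htailx : ∑' i : ℕ, (if x (i + (m+1)) then (9:ℝ)/10^(i + (m+1) + 1) else 0)
      ≤ (1:ℝ)/10^(m+1) := by
    rw [← hgeom]
    refine Summable.tsum_le_tsum (fun i => ?_) (hfs.comp_injective (add_left_injective (m+1)))
      (summable_geom9.comp_injective (add_left_injective (m+1)))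
    split
    · exact le_rfl
    · positivity
  have htaily : (0:ℝ) ≤ ∑' i : ℕ, (if y (i + (m+1)) then (9:ℝ)/10^(i + (m+1) + 1) else 0) := by
    refine tsum_nonneg fun i => ?_
    split <;> positivity
  have hlt : (1:ℝ)/10^(m+1) < 9/10^(m+1) := by
    have : (0:ℝ) < 10 ^ (m+1) := by positivity
    rw [div_lt_div_iff₀ this this]
    nlinarith
  rw [hxsplit, hysplit, ← hhead]
  linarith
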